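/- Let (Λ₁, φ₁) and (Λ₂, φ₂) be topological flows on compact metric spaces and let P : Λ₁ → Λ₂ be a continuous surjection satisfying P(φ₁(t,x)) = φ₂(t, P(x)) for all t ∈ ℝ and x ∈ Λ₁. Suppose there exists a closed orbit γ ⊂ Λ₁ of φ₁ (the orbit of a periodic point with minimal period T₀ > 0) such that P(γ) is a single point which is a singularity of φ₂ (a fixed point of the flow φ₂), and the restriction of P to Λ₁ \ γ is a bijection onto Λ₂ \ P(γ). If φ₁ has the standard shadowing property, then φ₂ has the standard shadowing property. -/

import Mathlib

open Metric Set

/-- A topological flow: a continuous map `φ : ℝ × Λ → Λ` with `φ 0 x = x` and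
`φ (s+t) x = φ s (φ t x)`. -/
def IsFlow {Λ : Type*} [TopologicalSpace Λ] (φ : ℝ → Λ → Λ) : Prop :=
  Continuous (fun q : ℝ × Λ => φ q.1 q.2) ∧ (∀ x, φ 0 x = x) ∧
    ∀ s t x, φ (s + t) x = φ s (φ t x)

/-- `ξ : ℝ → Λ` is a `d`-pseudotrajectory of the flow `φ`. -/
def IsPseudo {Λ : Type*} [MetricSpace Λ] (φ : ℝ → Λ → Λ) (d : ℝ) (ξ : ℝ → Λ) : Prop :=
  ∀ t : ℝ, ∀ s ∈ Set.Icc (0 : ℝ) 1, dist (ξ (t + s)) (φ s (ξ t)) < d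

/-- An orientation-preserving homeomorphism of `ℝ`. -/
def IsRep (f : ℝ → ℝ) : Prop :=
  Continuous f ∧ StrictMono f ∧ Function.Surjective f

/-- Membership in `Rep(ε)`. -/
def IsRepIn (ε : ℝ) (f : ℝ → ℝ) : Prop :=
  IsRep f ∧ ∀ a b : ℝ, b < a → |(f a - f b) / (a - b) - 1| < ε

/-- The standard shadowing property (on the whole space). -/
def StdShadowing {Λ : Type*} [MetricSpace Λ] (φ : ℝ → Λ → Λ) : Prop :=
  ∀ ε > 0, ∃ d > 0, ∀ ξ : ℝ → Λ, IsPseudo φ d ξ →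
    ∃ (x : Λ) (h : ℝ → ℝ), IsRepIn ε h ∧ ∀ t : ℝ, dist (ξ t) (φ (h t) x) < ε

/-- The chain recurrent set of a flow. -/
def CR {Λ : Type*} [MetricSpace Λ] (φ : ℝ → Λ → Λ) : Set Λ :=
  {x | ∀ d > 0, ∀ T > 0, ∃ ξ : ℝ → Λ, IsPseudo φ d ξ ∧ ξ 0 = x ∧ ∃ t ≥ T, ξ t = x}

open Filter

section Aux

variable {Λ : Type*} [MetricSpace Λ] {φ : ℝ → Λ → Λ}

lemma flow_cancel (hφ : IsFlow φ) (s : ℝ) {x y : Λ} (h : φ s x = φ s y) : x = y := by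
  have h2 := congrArg (φ (-s)) h
  rwa [← hφ.2.2, ← hφ.2.2, neg_add_cancel, hφ.2.1, hφ.2.1] at h2

/-- Combined uniform-continuity modulus for a flow on a compact space. -/
lemma flow_ucont [CompactSpace Λ] (hφ : IsFlow φ) :
    ∀ α : ℝ, 0 < α → ∃ β : ℝ, (0 < β ∧ β ≤ α ∧ β ≤ 1) ∧
      ((∀ (x y : Λ) (s : ℝ), |s| ≤ 2 → dist x y ≤ β → dist (φ s x) (φ s y) < α) ∧
       (∀ (x : Λ) (r : ℝ), |r| ≤ β → dist (φ r x) x < α)) := by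
  intro α hα
  have hK : IsCompact ((Icc (-2:ℝ) 2) ×ˢ (univ : Set Λ)) :=
    isCompact_Icc.prod isCompact_univ
  have hUC : UniformContinuousOn (fun q : ℝ × Λ => φ q.1 q.2) ((Icc (-2:ℝ) 2) ×ˢ univ) :=
    hK.uniformContinuousOn_of_continuous hφ.1.continuousOn
  rw [Metric.uniformContinuousOn_iff] at hUC
  obtain ⟨δ, hδ, hδ'⟩ := hUC α hα
  refine ⟨min (min (δ/2) (α/2)) 1, ⟨by positivity, by
      calc min (min (δ/2) (α/2)) 1 ≤ min (δ/2) (α/2) := min_le_left _ _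
      _ ≤ α/2 := min_le_right _ _
      _ ≤ α := by linarith, min_le_right _ _⟩, ?_, ?_⟩
  · intro x y s hs hxy
    have h1 : ((s, x) : ℝ × Λ) ∈ (Icc (-2:ℝ) 2) ×ˢ (univ : Set Λ) := by
      constructor
      · exact abs_le.mp hs
      · trivial
    have h2 : ((s, y) : ℝ × Λ) ∈ (Icc (-2:ℝ) 2) ×ˢ (univ : Set Λ) := by
      constructor
      · exact abs_le.mp hs
      · trivial
    have hd : dist ((s, x) : ℝ × Λ) ((s, y) : ℝ × Λ) < δ := by
      rw [Prod.dist_eq]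
      simp only [dist_self]
      have : dist x y < δ := by
        have : min (min (δ/2) (α/2)) 1 ≤ δ/2 :=
          le_trans (min_le_left _ _) (min_le_left _ _)
        linarith [hxy]
      rw [sup_lt_iff]
      exact ⟨hδ, this⟩
    exact hδ' _ h1 _ h2 hd
  · intro x r hr
    have hr2 : |r| ≤ 2 := le_trans hr (by
      calc min (min (δ/2) (α/2)) 1 ≤ 1 := min_le_right _ _
      _ ≤ 2 := by norm_num)
    have h1 : ((r, x) : ℝ × Λ) ∈ (Icc (-2:ℝ) 2) ×ˢ (univ : Set Λ) := ⟨abs_le.mp hr2, trivial⟩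
    have h2 : ((0:ℝ), x) ∈ (Icc (-2:ℝ) 2) ×ˢ (univ : Set Λ) := by
      constructor
      · constructor <;> norm_num
      · trivial
    have hd : dist ((r, x) : ℝ × Λ) (((0:ℝ), x)) < δ := by
      rw [Prod.dist_eq]
      simp only [dist_self]
      have : dist r 0 < δ := by
        rw [Real.dist_eq, sub_zero]
        have : min (min (δ/2) (α/2)) 1 ≤ δ/2 :=
          le_trans (min_le_left _ _) (min_le_left _ _)
        linarith [hr]
      rw [sup_lt_iff]
      exact ⟨this, hδ⟩
    have := hδ' _ h1 _ h2 hd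
    simpa [hφ.2.1] using this

/-- Turn a `∀ α ∃ β` modulus statement into a function. -/
lemma choose_modulus {Pr : ℝ → ℝ → Prop}
    (h : ∀ α : ℝ, 0 < α → ∃ β : ℝ, (0 < β ∧ β ≤ α ∧ β ≤ 1) ∧ Pr α β) :
    ∃ f : ℝ → ℝ, ∀ α : ℝ, 0 < α → ((0 < f α ∧ f α ≤ α ∧ f α ≤ 1) ∧ Pr α (f α)) := by
  refine ⟨fun α => if h' : 0 < α then (h α h').choose else 1, fun α hα => ?_⟩
  simp only [dif_pos hα]
  exact (h α hα).choose_spec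

end Aux

section Aux2

variable {Λ₁ Λ₂ : Type*} [MetricSpace Λ₁] [MetricSpace Λ₂]
variable {φ₁ : ℝ → Λ₁ → Λ₁} {φ₂ : ℝ → Λ₂ → Λ₂}

lemma flow_cancel' (hφ : IsFlow φ₂) (s : ℝ) {x y : Λ₂} (h : φ₂ s x = φ₂ s y) : x = y := by
  have h2 := congrArg (φ₂ (-s)) h
  rwa [← hφ.2.2, ← hφ.2.2, neg_add_cancel, hφ.2.1, hφ.2.1] at h2

lemma per_int (hφ : IsFlow φ₁) {p : Λ₁} {T₀ : ℝ} (hper : φ₁ T₀ p = p) :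
    ∀ k : ℤ, ∀ t : ℝ, φ₁ (t + k * T₀) p = φ₁ t p := by
  have hstep : ∀ t : ℝ, φ₁ (t + T₀) p = φ₁ t p := fun t => by rw [hφ.2.2, hper]
  intro k
  induction k using Int.induction_on with
  | zero => simp
  | succ n ih =>
      intro t
      have h1 : t + ((n : ℤ) + 1 : ℤ) * T₀ = (t + T₀) + (n : ℤ) * T₀ := by push_cast; ring
      rw [h1, ih (t + T₀), hstep t]
  | pred n ih =>
      intro t
      have h1 : t + (-(n : ℤ) - 1 : ℤ) * T₀ = (t - T₀) + (-(n : ℤ)) * T₀ := by push_cast; ring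
      have h2 : φ₁ (t - T₀) p = φ₁ t p := by
        have h3 := hstep (t - T₀); rw [sub_add_cancel] at h3; exact h3.symm
      have ih' := ih (t - T₀)
      push_cast at ih' h1 ⊢
      rw [h1, ih', h2]

lemma gamma_mem_p (hφ : IsFlow φ₁) {p : Λ₁} {γ : Set Λ₁}
    (hγ : γ = Set.range fun t : ℝ => φ₁ t p) : p ∈ γ := by
  rw [hγ]; exact ⟨0, hφ.2.1 p⟩

lemma gamma_inv (hφ : IsFlow φ₁) {p : Λ₁} {γ : Set Λ₁}
    (hγ : γ = Set.range fun t : ℝ => φ₁ t p) :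
    ∀ s : ℝ, ∀ x ∈ γ, φ₁ s x ∈ γ := by
  intro s x hx
  rw [hγ] at hx ⊢
  obtain ⟨u, hu⟩ := hx
  have hu' : φ₁ u p = x := hu
  exact ⟨s + u, by show φ₁ (s + u) p = φ₁ s x; rw [hφ.2.2, hu']⟩

lemma gamma_trans (hφ : IsFlow φ₁) {p : Λ₁} {T₀ : ℝ} (hT₀ : 0 < T₀) (hper : φ₁ T₀ p = p)
    {γ : Set Λ₁} (hγ : γ = Set.range fun t : ℝ => φ₁ t p) :
    ∀ u ∈ γ, ∀ v ∈ γ, ∃ τ : ℝ, 0 ≤ τ ∧ τ ≤ T₀ ∧ φ₁ τ u = v := by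
  intro u hu v hv
  rw [hγ] at hu hv
  obtain ⟨su, hsu'⟩ := hu
  obtain ⟨sv, hsv'⟩ := hv
  have hsu : φ₁ su p = u := hsu'
  have hsv : φ₁ sv p = v := hsv'
  set D := sv - su with hD
  set k := ⌊D / T₀⌋ with hk
  refine ⟨D - k * T₀, ?_, ?_, ?_⟩
  · have := Int.sub_floor_div_mul_nonneg D hT₀
    exact this
  · have := Int.sub_floor_div_mul_lt D hT₀
    exact le_of_lt this
  · rw [← hsu, ← hφ.2.2]
    have h1 : D - ↑k * T₀ + su = sv + (-k : ℤ) * T₀ := by push_cast; ring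
    rw [h1, per_int hφ hper (-k) sv, hsv]

lemma flow_escape [CompactSpace Λ₂] (hφ₂ : IsFlow φ₂) (q : Λ₂) (hq : ∀ t : ℝ, φ₂ t q = q) :
    ∀ r : ℝ, 0 < r → ∃ m : ℝ, (0 < m ∧ m ≤ r ∧ m ≤ 1) ∧
      ∀ y : Λ₂, r ≤ dist y q → ∀ s ∈ Icc (0:ℝ) 1, m ≤ dist (φ₂ s y) q := by
  intro r hr
  set K := (Icc (0:ℝ) 1) ×ˢ {y : Λ₂ | r ≤ dist y q} with hK
  have hclosed : IsClosed {y : Λ₂ | r ≤ dist y q} :=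
    isClosed_le continuous_const (continuous_id.dist continuous_const)
  have hKc : IsCompact K := isCompact_Icc.prod hclosed.isCompact
  by_cases hne : K.Nonempty
  · have hcont : ContinuousOn (fun z : ℝ × Λ₂ => dist (φ₂ z.1 z.2) q) K :=
      (hφ₂.1.dist continuous_const).continuousOn
    obtain ⟨z₀, hz₀K, hz₀⟩ := hKc.exists_isMinOn hne hcont
    have hpos : 0 < dist (φ₂ z₀.1 z₀.2) q := by
      rcases eq_or_lt_of_le (dist_nonneg (x := φ₂ z₀.1 z₀.2) (y := q)) with h | h
      · exfalso
        have heq : φ₂ z₀.1 z₀.2 = q := dist_eq_zero.mp h.symm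
        have : z₀.2 = q := by
          have h1 : φ₂ (-z₀.1) (φ₂ z₀.1 z₀.2) = z₀.2 := by
            rw [← hφ₂.2.2, neg_add_cancel, hφ₂.2.1]
          rw [heq, hq (-z₀.1)] at h1
          exact h1.symm
        have hz2 : r ≤ dist z₀.2 q := hz₀K.2
        rw [this, dist_self] at hz2
        linarith
      · exact h
    refine ⟨min (min (dist (φ₂ z₀.1 z₀.2) q) r) 1, ⟨by positivity, ?_, min_le_right _ _⟩, ?_⟩
    · exact le_trans (min_le_left _ _) (min_le_right _ _)
    · intro y hy s hs
      have hmem : ((s, y) : ℝ × Λ₂) ∈ K := ⟨hs, hy⟩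
      exact le_trans (le_trans (min_le_left _ _) (min_le_left _ _)) (isMinOn_iff.mp hz₀ (s, y) hmem)
  · refine ⟨min r 1, ⟨by positivity, min_le_left _ _, min_le_right _ _⟩, ?_⟩
    intro y hy s hs
    exact absurd ⟨(s, y), ⟨hs, hy⟩⟩ hne

end Aux2

section Aux3

variable {Λ₁ Λ₂ : Type*} [MetricSpace Λ₁] [MetricSpace Λ₂]
variable {φ₁ : ℝ → Λ₁ → Λ₁} {φ₂ : ℝ → Λ₂ → Λ₂}

/-- The inverse of `P` off the collapsed orbit. -/
noncomputable def Qinv (P : Λ₁ → Λ₂) (γ : Set Λ₁) (p : Λ₁) : Λ₂ → Λ₁ :=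
  fun y => letI : Nonempty Λ₁ := ⟨p⟩; Function.invFunOn P γᶜ y

variable {P : Λ₁ → Λ₂} {γ : Set Λ₁} {q : Λ₂} {p : Λ₁}

lemma Qinv_spec (hbij : Set.BijOn P γᶜ {q}ᶜ) {y : Λ₂} (hy : y ≠ q) :
    Qinv P γ p y ∉ γ ∧ P (Qinv P γ p y) = y := by
  letI : Nonempty Λ₁ := ⟨p⟩
  have hy' : ∃ a ∈ γᶜ, P a = y := hbij.surjOn (show y ∈ {q}ᶜ from hy)
  exact ⟨Function.invFunOn_mem hy', Function.invFunOn_eq hy'⟩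

lemma Qinv_P (hbij : Set.BijOn P γᶜ {q}ᶜ) {x : Λ₁} (hx : x ∉ γ) :
    Qinv P γ p (P x) = x := by
  have hPx : P x ≠ q := hbij.mapsTo hx
  have h := Qinv_spec (p := p) hbij hPx
  exact hbij.injOn h.1 hx h.2

lemma Qinv_flow (hφ₁ : IsFlow φ₁) (hφ₂ : IsFlow φ₂)
    (hsemi : ∀ (t : ℝ) (x : Λ₁), P (φ₁ t x) = φ₂ t (P x))
    (hbij : Set.BijOn P γᶜ {q}ᶜ) (hq : ∀ t : ℝ, φ₂ t q = q)
    (hinv : ∀ s : ℝ, ∀ x ∈ γ, φ₁ s x ∈ γ)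
    {y : Λ₂} (hy : y ≠ q) (s : ℝ) :
    φ₁ s (Qinv P γ p y) = Qinv P γ p (φ₂ s y) := by
  obtain ⟨hmem, hPQ⟩ := Qinv_spec (p := p) hbij hy
  have h1 : φ₁ s (Qinv P γ p y) ∉ γ := by
    intro hmem'
    apply hmem
    have h2 := hinv (-s) _ hmem'
    rwa [← hφ₁.2.2, neg_add_cancel, hφ₁.2.1] at h2
  have h3 : P (φ₁ s (Qinv P γ p y)) = φ₂ s y := by rw [hsemi, hPQ]
  calc φ₁ s (Qinv P γ p y) = Qinv P γ p (P (φ₁ s (Qinv P γ p y))) := (Qinv_P hbij h1).symm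
  _ = Qinv P γ p (φ₂ s y) := by rw [h3]

lemma one_div_subseq_tendsto {σ : ℕ → ℕ} (hσ : StrictMono σ) :
    Filter.Tendsto (fun n : ℕ => 1/((σ n : ℝ)+1)) Filter.atTop (nhds 0) :=
  tendsto_one_div_add_atTop_nhds_zero_nat.comp hσ.tendsto_atTop

lemma Qinv_ucont [CompactSpace Λ₁] (hPcont : Continuous P)
    (hbij : Set.BijOn P γᶜ {q}ᶜ) (hPγ : ∀ x ∈ γ, P x = q) (p : Λ₁) :
    ∀ θ : ℝ, 0 < θ → ∀ α : ℝ, 0 < α → ∃ β : ℝ, 0 < β ∧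
      ∀ y y' : Λ₂, θ ≤ dist y q → θ ≤ dist y' q → dist y y' ≤ β →
        dist (Qinv P γ p y) (Qinv P γ p y') < α := by
  intro θ hθ α hα
  by_contra hcon
  push_neg at hcon
  have hseq : ∀ n : ℕ, ∃ yy : Λ₂ × Λ₂, θ ≤ dist yy.1 q ∧ θ ≤ dist yy.2 q ∧
      dist yy.1 yy.2 ≤ 1/(n+1) ∧ α ≤ dist (Qinv P γ p yy.1) (Qinv P γ p yy.2) := by
    intro n
    obtain ⟨y, y', hy1, hy2, hy3, hy4⟩ := hcon (1/(n+1)) (by positivity)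
    exact ⟨(y, y'), hy1, hy2, hy3, hy4⟩
  choose Y hY1 hY2 hY3 hY4 using hseq
  set X : ℕ → Λ₁ × Λ₁ := fun n => (Qinv P γ p (Y n).1, Qinv P γ p (Y n).2) with hX
  obtain ⟨x, -, σ, hσ, hconv⟩ :=
    (isCompact_univ (X := Λ₁ × Λ₁)).tendsto_subseq (fun n => mem_univ (X n))
  have hne1 : ∀ n, (Y n).1 ≠ q := fun n => dist_pos.mp (lt_of_lt_of_le hθ (hY1 n))
  have hne2 : ∀ n, (Y n).2 ≠ q := fun n => dist_pos.mp (lt_of_lt_of_le hθ (hY2 n))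
  have hPX1 : ∀ n, P (X n).1 = (Y n).1 := fun n => (Qinv_spec (p := p) hbij (hne1 n)).2
  have hPX2 : ∀ n, P (X n).2 = (Y n).2 := fun n => (Qinv_spec (p := p) hbij (hne2 n)).2
  have hx1 : Tendsto (fun n => (X (σ n)).1) atTop (nhds x.1) :=
    (continuous_fst.tendsto x).comp hconv
  have hx2 : Tendsto (fun n => (X (σ n)).2) atTop (nhds x.2) :=
    (continuous_snd.tendsto x).comp hconv
  have hPt1 : Tendsto (fun n => (Y (σ n)).1) atTop (nhds (P x.1)) := by
    have h := (hPcont.tendsto x.1).comp hx1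
    simpa [Function.comp_def, hPX1] using h
  have hPt2 : Tendsto (fun n => (Y (σ n)).2) atTop (nhds (P x.2)) := by
    have h := (hPcont.tendsto x.2).comp hx2
    simpa [Function.comp_def, hPX2] using h
  have hdY : Tendsto (fun n => dist (Y (σ n)).1 (Y (σ n)).2) atTop (nhds 0) := by
    apply squeeze_zero (fun n => dist_nonneg) (fun n => hY3 (σ n))
    exact one_div_subseq_tendsto hσ
  have hPeq : P x.1 = P x.2 :=
    dist_eq_zero.mp (tendsto_nhds_unique (hPt1.dist hPt2) hdY)
  have hθ1 : θ ≤ dist (P x.1) q :=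
    ge_of_tendsto' (hPt1.dist tendsto_const_nhds) (fun n => hY1 (σ n))
  have hθ2 : θ ≤ dist (P x.2) q :=
    ge_of_tendsto' (hPt2.dist tendsto_const_nhds) (fun n => hY2 (σ n))
  have hx1γ : x.1 ∉ γ := fun h => by
    rw [hPγ x.1 h, dist_self] at hθ1; linarith
  have hx2γ : x.2 ∉ γ := fun h => by
    rw [hPγ x.2 h, dist_self] at hθ2; linarith
  have hxx : x.1 = x.2 := hbij.injOn hx1γ hx2γ hPeq
  have hd2 : Tendsto (fun n => dist (X (σ n)).1 (X (σ n)).2) atTop (nhds (dist x.1 x.2)) :=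
    hx1.dist hx2
  rw [hxx, dist_self] at hd2
  have : α ≤ 0 := ge_of_tendsto' hd2 (fun n => hY4 (σ n))
  linarith

lemma Qinv_near_gamma [CompactSpace Λ₁] (hPcont : Continuous P)
    (hbij : Set.BijOn P γᶜ {q}ᶜ) (hPγ : ∀ x ∈ γ, P x = q) (p : Λ₁) :
    ∀ ρ : ℝ, 0 < ρ → ∃ δ : ℝ, 0 < δ ∧
      ∀ y : Λ₂, y ≠ q → dist y q ≤ δ → ∃ g ∈ γ, dist (Qinv P γ p y) g ≤ ρ := by
  intro ρ hρ
  by_contra hcon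
  push_neg at hcon
  have hseq : ∀ n : ℕ, ∃ y : Λ₂, y ≠ q ∧ dist y q ≤ 1/(n+1) ∧
      ∀ g ∈ γ, ρ < dist (Qinv P γ p y) g := by
    intro n
    obtain ⟨y, hy1, hy2, hy3⟩ := hcon (1/(n+1)) (by positivity)
    exact ⟨y, hy1, hy2, fun g hg => hy3 g hg⟩
  choose Y hY1 hY2 hY3 using hseq
  set X : ℕ → Λ₁ := fun n => Qinv P γ p (Y n) with hX
  obtain ⟨x, -, σ, hσ, hconv⟩ :=
    (isCompact_univ (X := Λ₁)).tendsto_subseq (fun n => mem_univ (X n))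
  have hPX : ∀ n, P (X n) = Y n := fun n => (Qinv_spec (p := p) hbij (hY1 n)).2
  have hYq : Tendsto (fun n => Y (σ n)) atTop (nhds q) := by
    rw [tendsto_iff_dist_tendsto_zero]
    apply squeeze_zero (fun n => dist_nonneg) (fun n => hY2 (σ n))
    exact one_div_subseq_tendsto hσ
  have hPx : Tendsto (fun n => Y (σ n)) atTop (nhds (P x)) := by
    have h := (hPcont.tendsto x).comp hconv
    simpa [Function.comp_def, hPX] using h
  have hPxq : P x = q := tendsto_nhds_unique hPx hYq
  have hxγ : x ∈ γ := by
    by_contra hxγ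
    exact (hbij.mapsTo hxγ) hPxq
  have hdist : Tendsto (fun n => dist (X (σ n)) x) atTop (nhds 0) := by
    have := hconv.dist (tendsto_const_nhds (x := x) (f := atTop))
    simpa using this
  have hge : ρ ≤ 0 := ge_of_tendsto' hdist (fun n => le_of_lt (hY3 (σ n) x hxγ))
  linarith

end Aux3

section Tube

variable {Λ₂ : Type*} [MetricSpace Λ₂]

/-- Integer `n` is "mid" : the pseudotrajectory is `δm`-close to `q` at time `n`. -/
def MidI (ξ : ℝ → Λ₂) (q : Λ₂) (δm : ℝ) (n : ℤ) : Prop := dist (ξ n) q < δm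

/-- `t` belongs to a tube: some `δs`-deep integer `k` is connected to `t` through mid integers. -/
def InT (ξ : ℝ → Λ₂) (q : Λ₂) (δm δs : ℝ) (t : ℝ) : Prop :=
  ∃ k : ℤ, dist (ξ k) q < δs ∧
    ∀ j : ℤ, min k ⌊t⌋ ≤ j → j ≤ max k ⌈t⌉ → MidI ξ q δm j

def HasA (ξ : ℝ → Λ₂) (q : Λ₂) (δm : ℝ) (t : ℝ) : Prop :=
  ∃ m : ℤ, ¬ MidI ξ q δm m ∧ m ≤ ⌊t⌋

def HasB (ξ : ℝ → Λ₂) (q : Λ₂) (δm : ℝ) (t : ℝ) : Prop :=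
  ∃ m : ℤ, ¬ MidI ξ q δm m ∧ ⌊t⌋ < m

variable {ξ : ℝ → Λ₂} {q : Λ₂} {δm δs : ℝ}

open Classical in
noncomputable def aIdx (ξ : ℝ → Λ₂) (q : Λ₂) (δm : ℝ) (t : ℝ) : ℤ :=
  if h : HasA ξ q δm t then
    (Int.exists_greatest_of_bdd (⟨⌊t⌋, fun _ hz => hz.2⟩ :
      ∃ b : ℤ, ∀ z : ℤ, (¬ MidI ξ q δm z ∧ z ≤ ⌊t⌋) → z ≤ b) h).choose + 1
  else 0

open Classical in
noncomputable def bIdx (ξ : ℝ → Λ₂) (q : Λ₂) (δm : ℝ) (t : ℝ) : ℤ :=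
  if h : HasB ξ q δm t then
    (Int.exists_least_of_bdd (⟨⌊t⌋ + 1, fun _ hz => hz.2⟩ :
      ∃ b : ℤ, ∀ z : ℤ, (¬ MidI ξ q δm z ∧ ⌊t⌋ < z) → b ≤ z) h).choose - 1
  else 0

lemma aIdx_spec {t : ℝ} (h : HasA ξ q δm t) :
    ¬ MidI ξ q δm (aIdx ξ q δm t - 1) ∧ (aIdx ξ q δm t - 1 ≤ ⌊t⌋) ∧
      ∀ m : ℤ, ¬ MidI ξ q δm m → m ≤ ⌊t⌋ → m ≤ aIdx ξ q δm t - 1 := by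
  rw [aIdx]
  rw [dif_pos h]
  have hs := (Int.exists_greatest_of_bdd (⟨⌊t⌋, fun _ hz => hz.2⟩ :
      ∃ b : ℤ, ∀ z : ℤ, (¬ MidI ξ q δm z ∧ z ≤ ⌊t⌋) → z ≤ b) h).choose_spec
  refine ⟨by simpa using hs.1.1, by simpa using hs.1.2, fun m hm hm' => by
    simpa using hs.2 m ⟨hm, hm'⟩⟩

lemma bIdx_spec {t : ℝ} (h : HasB ξ q δm t) :
    ¬ MidI ξ q δm (bIdx ξ q δm t + 1) ∧ (⌊t⌋ < bIdx ξ q δm t + 1) ∧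
      ∀ m : ℤ, ¬ MidI ξ q δm m → ⌊t⌋ < m → bIdx ξ q δm t + 1 ≤ m := by
  rw [bIdx]
  rw [dif_pos h]
  have hs := (Int.exists_least_of_bdd (⟨⌊t⌋ + 1, fun _ hz => hz.2⟩ :
      ∃ b : ℤ, ∀ z : ℤ, (¬ MidI ξ q δm z ∧ ⌊t⌋ < z) → b ≤ z) h).choose_spec
  refine ⟨by simpa using hs.1.1, by simpa using hs.1.2, fun m hm hm' => by
    simpa using hs.2 m ⟨hm, hm'⟩⟩

lemma InT_floor_mid {t : ℝ} (h : InT ξ q δm δs t) : MidI ξ q δm ⌊t⌋ := by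
  obtain ⟨k, -, hk⟩ := h
  exact hk ⌊t⌋ (min_le_right _ _) (le_trans (Int.floor_le_ceil t) (le_max_right _ _))

lemma InT_ceil_mid {t : ℝ} (h : InT ξ q δm δs t) : MidI ξ q δm ⌈t⌉ := by
  obtain ⟨k, -, hk⟩ := h
  exact hk ⌈t⌉ (le_trans (min_le_right _ _) (Int.floor_le_ceil t)) (le_max_right _ _)

lemma aIdx_le_floor {t : ℝ} (hT : InT ξ q δm δs t) (hA : HasA ξ q δm t) :
    aIdx ξ q δm t ≤ ⌊t⌋ := by
  obtain ⟨hfar, hle, -⟩ := aIdx_spec hA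
  rcases lt_or_eq_of_le hle with h | h
  · omega
  · exact absurd (h ▸ InT_floor_mid hT) hfar

lemma ceil_le_bIdx {t : ℝ} (hT : InT ξ q δm δs t) (hB : HasB ξ q δm t) :
    ⌈t⌉ ≤ bIdx ξ q δm t := by
  obtain ⟨hfar, hlt, -⟩ := bIdx_spec hB
  have hc : ⌈t⌉ ≤ ⌊t⌋ + 1 := Int.ceil_le_floor_add_one t
  rcases lt_or_eq_of_le hc with h | h
  · omega
  · have : bIdx ξ q δm t + 1 ≠ ⌈t⌉ := fun he => hfar (he ▸ InT_ceil_mid hT)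
    omega

lemma mid_of_left {t : ℝ} (hA : HasA ξ q δm t) :
    ∀ j : ℤ, aIdx ξ q δm t ≤ j → j ≤ ⌊t⌋ → MidI ξ q δm j := by
  intro j h1 h2
  by_contra hj
  have := (aIdx_spec hA).2.2 j hj h2
  omega

lemma mid_of_right {t : ℝ} (hB : HasB ξ q δm t) :
    ∀ j : ℤ, ⌊t⌋ < j → j ≤ bIdx ξ q δm t → MidI ξ q δm j := by
  intro j h1 h2
  by_contra hj
  have := (bIdx_spec hB).2.2 j hj h1
  omega

lemma mid_of_range {t : ℝ} (hA : HasA ξ q δm t) (hB : HasB ξ q δm t) :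
    ∀ j : ℤ, aIdx ξ q δm t ≤ j → j ≤ bIdx ξ q δm t → MidI ξ q δm j := by
  intro j h1 h2
  rcases le_or_gt j ⌊t⌋ with h | h
  · exact mid_of_left hA j h1 h
  · exact mid_of_right hB j h h2

/-- The deep witness of a tube lies between the endpoints. -/
lemma deep_witness_between {t : ℝ} (hT : InT ξ q δm δs t) :
    ∃ k : ℤ, dist (ξ k) q < δs ∧
      (HasA ξ q δm t → aIdx ξ q δm t ≤ k) ∧ (HasB ξ q δm t → k ≤ bIdx ξ q δm t) := by
  obtain ⟨k, hk, hmid⟩ := hT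
  refine ⟨k, hk, ?_, ?_⟩
  · intro hA
    obtain ⟨hfar, hle, -⟩ := aIdx_spec hA
    by_contra hc
    push_neg at hc
    have hj1 : min k ⌊t⌋ ≤ aIdx ξ q δm t - 1 := le_trans (min_le_left _ _) (by omega)
    have hj2 : aIdx ξ q δm t - 1 ≤ max k ⌈t⌉ :=
      le_trans (le_trans hle (Int.floor_le_ceil t)) (le_max_right _ _)
    exact hfar (hmid _ hj1 hj2)
  · intro hB
    obtain ⟨hfar, hlt, -⟩ := bIdx_spec hB
    by_contra hc
    push_neg at hc
    have hj1 : min k ⌊t⌋ ≤ bIdx ξ q δm t + 1 := le_trans (min_le_right _ _) (by omega)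
    have hj2 : bIdx ξ q δm t + 1 ≤ max k ⌈t⌉ := le_trans (by omega) (le_max_left _ _)
    exact hfar (hmid _ hj1 hj2)

/-- Membership of nearby points in the same tube. -/
lemma InT_of_between {t t' : ℝ} (hT : InT ξ q δm δs t)
    (h1 : HasA ξ q δm t → (aIdx ξ q δm t : ℝ) ≤ t')
    (h2 : HasB ξ q δm t → t' ≤ (bIdx ξ q δm t : ℝ)) :
    InT ξ q δm δs t' := by
  obtain ⟨k, hk, hka, hkb⟩ := deep_witness_between hT
  refine ⟨k, hk, ?_⟩
  intro j hj1 hj2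
  rcases le_or_gt j ⌊t⌋ with h | h
  · -- j ≤ ⌊t⌋ : left side
    by_cases hA : HasA ξ q δm t
    · refine mid_of_left hA j ?_ h
      have : aIdx ξ q δm t ≤ min k ⌊t'⌋ := by
        refine le_min (hka hA) ?_
        exact Int.le_floor.mpr (h1 hA)
      omega
    · -- everything ≤ ⌊t⌋ is mid
      by_contra hj
      exact hA ⟨j, hj, h⟩
  · by_cases hB : HasB ξ q δm t
    · refine mid_of_right hB j h ?_
      have : max k ⌈t'⌉ ≤ bIdx ξ q δm t := by
        refine max_le (hkb hB) ?_
        exact Int.ceil_le.mpr (h2 hB)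
      omega
    · by_contra hj
      exact hB ⟨j, hj, h⟩

end Tube

section Tube2

variable {Λ₂ : Type*} [MetricSpace Λ₂] {ξ : ℝ → Λ₂} {q : Λ₂} {δm δs : ℝ}

lemma same_comp {t t' : ℝ} (hT : InT ξ q δm δs t) (hT' : InT ξ q δm δs t')
    (h1 : t ≤ t') (h2 : t' ≤ t + 1) :
    (HasA ξ q δm t ↔ HasA ξ q δm t') ∧ (HasB ξ q δm t ↔ HasB ξ q δm t') ∧
      (HasA ξ q δm t → aIdx ξ q δm t = aIdx ξ q δm t') ∧
      (HasB ξ q δm t → bIdx ξ q δm t = bIdx ξ q δm t') := by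
  have hf1 : ⌊t⌋ ≤ ⌊t'⌋ := Int.floor_le_floor h1
  have hf2 : ⌊t'⌋ ≤ ⌊t⌋ + 1 := by
    have h3 := Int.floor_le_floor h2
    rwa [Int.floor_add_one] at h3
  have hmid' := InT_floor_mid hT'
  have hiffA : ∀ m : ℤ, (¬ MidI ξ q δm m ∧ m ≤ ⌊t⌋) ↔ (¬ MidI ξ q δm m ∧ m ≤ ⌊t'⌋) := by
    intro m
    constructor
    · rintro ⟨hm, hm'⟩; exact ⟨hm, by omega⟩
    · rintro ⟨hm, hm'⟩
      refine ⟨hm, ?_⟩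
      by_contra hc
      push_neg at hc
      have he : m = ⌊t'⌋ := by omega
      exact hm (he ▸ hmid')
  have hiffB : ∀ m : ℤ, (¬ MidI ξ q δm m ∧ ⌊t⌋ < m) ↔ (¬ MidI ξ q δm m ∧ ⌊t'⌋ < m) := by
    intro m
    constructor
    · rintro ⟨hm, hm'⟩
      refine ⟨hm, ?_⟩
      by_contra hc
      push_neg at hc
      have he : m = ⌊t'⌋ := by omega
      exact hm (he ▸ hmid')
    · rintro ⟨hm, hm'⟩; exact ⟨hm, by omega⟩
  have hHA : HasA ξ q δm t ↔ HasA ξ q δm t' :=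
    ⟨fun ⟨m, hm⟩ => ⟨m, (hiffA m).mp hm⟩, fun ⟨m, hm⟩ => ⟨m, (hiffA m).mpr hm⟩⟩
  have hHB : HasB ξ q δm t ↔ HasB ξ q δm t' :=
    ⟨fun ⟨m, hm⟩ => ⟨m, (hiffB m).mp hm⟩, fun ⟨m, hm⟩ => ⟨m, (hiffB m).mpr hm⟩⟩
  refine ⟨hHA, hHB, ?_, ?_⟩
  · intro hA
    have hA' : HasA ξ q δm t' := hHA.mp hA
    obtain ⟨g1f, g1le, g1max⟩ := aIdx_spec hA
    obtain ⟨g2f, g2le, g2max⟩ := aIdx_spec hA'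
    have e1 := g2max _ g1f (((hiffA _).mp ⟨g1f, g1le⟩).2)
    have e2 := g1max _ g2f (((hiffA _).mpr ⟨g2f, g2le⟩).2)
    omega
  · intro hB
    have hB' : HasB ξ q δm t' := hHB.mp hB
    obtain ⟨g1f, g1lt, g1min⟩ := bIdx_spec hB
    obtain ⟨g2f, g2lt, g2min⟩ := bIdx_spec hB'
    have e1 := g2min _ g1f (((hiffB _).mp ⟨g1f, g1lt⟩).2)
    have e2 := g1min _ g2f (((hiffB _).mpr ⟨g2f, g2lt⟩).2)
    omega

end Tube2

section Lift

variable {Λ₁ Λ₂ : Type*} [MetricSpace Λ₁] [MetricSpace Λ₂]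

open Classical in
/-- Choice of a point of `γ` at distance `≤ ρ` from `x` (junk value `p`). -/
noncomputable def zPt (γ : Set Λ₁) (p : Λ₁) (ρ : ℝ) (x : Λ₁) : Λ₁ :=
  if h : ∃ g ∈ γ, dist x g ≤ ρ then h.choose else p

lemma zPt_mem {γ : Set Λ₁} {p : Λ₁} (hp : p ∈ γ) (ρ : ℝ) (x : Λ₁) : zPt γ p ρ x ∈ γ := by
  rw [zPt]
  split
  · next h => exact h.choose_spec.1
  · exact hp

lemma zPt_close {γ : Set Λ₁} {p : Λ₁} {ρ : ℝ} {x : Λ₁} (h : ∃ g ∈ γ, dist x g ≤ ρ) :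
    dist x (zPt γ p ρ x) ≤ ρ := by
  rw [zPt, dif_pos h]
  exact h.choose_spec.2

open Classical in
/-- Choice of a transition time along the closed orbit. -/
noncomputable def tauSel (φ₁ : ℝ → Λ₁ → Λ₁) (T₀ : ℝ) (u v : Λ₁) : ℝ :=
  if h : ∃ τ : ℝ, 0 ≤ τ ∧ τ ≤ T₀ ∧ φ₁ τ u = v then h.choose else 0

lemma tauSel_spec {φ₁ : ℝ → Λ₁ → Λ₁} {T₀ : ℝ} {u v : Λ₁}
    (h : ∃ τ : ℝ, 0 ≤ τ ∧ τ ≤ T₀ ∧ φ₁ τ u = v) :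
    0 ≤ tauSel φ₁ T₀ u v ∧ tauSel φ₁ T₀ u v ≤ T₀ ∧ φ₁ (tauSel φ₁ T₀ u v) u = v := by
  rw [tauSel, dif_pos h]
  exact h.choose_spec

open Classical in
/-- The lift of the pseudotrajectory `ξ` to `Λ₁`. -/
noncomputable def liftFn (φ₁ : ℝ → Λ₁ → Λ₁) (P : Λ₁ → Λ₂) (γ : Set Λ₁) (p : Λ₁)
    (T₀ ρ : ℝ) (ξ : ℝ → Λ₂) (q : Λ₂) (δm δs : ℝ) (t : ℝ) : Λ₁ :=
  if InT ξ q δm δs t then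
    (if HasA ξ q δm t then
      (if HasB ξ q δm t then
        φ₁ ((1 + (tauSel φ₁ T₀
              (φ₁ ((bIdx ξ q δm t : ℝ) - (aIdx ξ q δm t : ℝ))
                (zPt γ p ρ (Qinv P γ p (ξ (aIdx ξ q δm t)))))
              (zPt γ p ρ (Qinv P γ p (ξ (bIdx ξ q δm t))))) /
            ((bIdx ξ q δm t : ℝ) - (aIdx ξ q δm t : ℝ))) * (t - (aIdx ξ q δm t : ℝ)))
          (zPt γ p ρ (Qinv P γ p (ξ (aIdx ξ q δm t))))
      else
        φ₁ (t - (aIdx ξ q δm t : ℝ)) (zPt γ p ρ (Qinv P γ p (ξ (aIdx ξ q δm t)))))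
    else
      φ₁ (t - (bIdx ξ q δm t : ℝ)) (zPt γ p ρ (Qinv P γ p (ξ (bIdx ξ q δm t)))))
  else Qinv P γ p (ξ t)

variable {φ₁ : ℝ → Λ₁ → Λ₁} {P : Λ₁ → Λ₂} {γ : Set Λ₁} {p : Λ₁} {T₀ ρ : ℝ}
  {ξ : ℝ → Λ₂} {q : Λ₂} {δm δs : ℝ} {t : ℝ}

lemma liftFn_off (h : ¬ InT ξ q δm δs t) :
    liftFn φ₁ P γ p T₀ ρ ξ q δm δs t = Qinv P γ p (ξ t) := by
  rw [liftFn, if_neg h]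

lemma liftFn_AB (h : InT ξ q δm δs t) (hA : HasA ξ q δm t) (hB : HasB ξ q δm t) :
    liftFn φ₁ P γ p T₀ ρ ξ q δm δs t =
      φ₁ ((1 + (tauSel φ₁ T₀
            (φ₁ ((bIdx ξ q δm t : ℝ) - (aIdx ξ q δm t : ℝ))
              (zPt γ p ρ (Qinv P γ p (ξ (aIdx ξ q δm t)))))
            (zPt γ p ρ (Qinv P γ p (ξ (bIdx ξ q δm t))))) /
          ((bIdx ξ q δm t : ℝ) - (aIdx ξ q δm t : ℝ))) * (t - (aIdx ξ q δm t : ℝ)))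
        (zPt γ p ρ (Qinv P γ p (ξ (aIdx ξ q δm t)))) := by
  rw [liftFn, if_pos h, if_pos hA, if_pos hB]

lemma liftFn_AnB (h : InT ξ q δm δs t) (hA : HasA ξ q δm t) (hB : ¬ HasB ξ q δm t) :
    liftFn φ₁ P γ p T₀ ρ ξ q δm δs t =
      φ₁ (t - (aIdx ξ q δm t : ℝ)) (zPt γ p ρ (Qinv P γ p (ξ (aIdx ξ q δm t)))) := by
  rw [liftFn, if_pos h, if_pos hA, if_neg hB]

lemma liftFn_nA (h : InT ξ q δm δs t) (hA : ¬ HasA ξ q δm t) :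
    liftFn φ₁ P γ p T₀ ρ ξ q δm δs t =
      φ₁ (t - (bIdx ξ q δm t : ℝ)) (zPt γ p ρ (Qinv P γ p (ξ (bIdx ξ q δm t)))) := by
  rw [liftFn, if_pos h, if_neg hA]

lemma liftFn_mem_gamma (hp : p ∈ γ) (hinv : ∀ s : ℝ, ∀ x ∈ γ, φ₁ s x ∈ γ)
    (h : InT ξ q δm δs t) : liftFn φ₁ P γ p T₀ ρ ξ q δm δs t ∈ γ := by
  rw [liftFn, if_pos h]
  split
  · split
    · exact hinv _ _ (zPt_mem hp _ _)
    · exact hinv _ _ (zPt_mem hp _ _)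
  · exact hinv _ _ (zPt_mem hp _ _)

end Lift


set_option maxHeartbeats 4000000 in
/-- Theorem 1.2 (factor theorem): if `P` is a semiconjugacy between flows on compact metric
spaces which collapses exactly one closed orbit `γ` to a singularity and is a bijection
elsewhere, then the standard shadowing property of `φ₁` implies that of `φ₂`. -/
theorem factor_preserves_standard_shadowing
    {Λ₁ Λ₂ : Type*} [MetricSpace Λ₁] [CompactSpace Λ₁] [MetricSpace Λ₂] [CompactSpace Λ₂]
    (φ₁ : ℝ → Λ₁ → Λ₁) (φ₂ : ℝ → Λ₂ → Λ₂) (hφ₁ : IsFlow φ₁) (hφ₂ : IsFlow φ₂)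
    (P : Λ₁ → Λ₂) (hPcont : Continuous P) (hPsurj : Function.Surjective P)
    (hsemi : ∀ (t : ℝ) (x : Λ₁), P (φ₁ t x) = φ₂ t (P x))
    (p : Λ₁) (T₀ : ℝ) (hT₀ : 0 < T₀) (hper : φ₁ T₀ p = p)
    (hmin : ∀ t ∈ Set.Ioo 0 T₀, φ₁ t p ≠ p)
    (γ : Set Λ₁) (hγ : γ = Set.range fun t : ℝ => φ₁ t p)
    (q : Λ₂) (hPγ : ∀ x ∈ γ, P x = q) (hq : ∀ t : ℝ, φ₂ t q = q)
    (hbij : Set.BijOn P γᶜ {q}ᶜ)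
    (hshadow : StdShadowing φ₁) :
    StdShadowing φ₂ := by
  classical
  have hpγ : p ∈ γ := gamma_mem_p hφ₁ hγ
  have hinv : ∀ s : ℝ, ∀ x ∈ γ, φ₁ s x ∈ γ := gamma_inv hφ₁ hγ
  have htrans := gamma_trans hφ₁ hT₀ hper hγ
  obtain ⟨Φ₁, hΦ₁⟩ := choose_modulus (flow_ucont hφ₁)
  obtain ⟨Φ₂, hΦ₂⟩ := choose_modulus (flow_ucont hφ₂)
  obtain ⟨μf, hμf⟩ := choose_modulus (flow_escape hφ₂ q hq)
  intro ε hε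
  have hPuc := CompactSpace.uniformContinuous_of_continuous hPcont
  rw [Metric.uniformContinuous_iff] at hPuc
  obtain ⟨βP, hβP0, hβP⟩ := hPuc (ε/4) (by linarith)
  obtain ⟨ε₁, hε₁def⟩ : ∃ x : ℝ, x = min (ε/2) (βP/2) := ⟨_, rfl⟩
  have hε₁0 : 0 < ε₁ := by rw [hε₁def]; exact lt_min (by positivity) (by positivity)
  have hε₁a : ε₁ ≤ ε/2 := by rw [hε₁def]; exact min_le_left _ _
  have hε₁b : ε₁ ≤ βP/2 := by rw [hε₁def]; exact min_le_right _ _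
  obtain ⟨d₁, hd₁0, hshad⟩ := hshadow ε₁ hε₁0
  obtain ⟨c₁, hc₁def⟩ : ∃ x : ℝ, x = Φ₁ (d₁/4) := ⟨_, rfl⟩
  have hc₁ : ((0 < c₁ ∧ c₁ ≤ d₁/4 ∧ c₁ ≤ 1) ∧
      ((∀ (x y : Λ₁) (s : ℝ), |s| ≤ 2 → dist x y ≤ c₁ → dist (φ₁ s x) (φ₁ s y) < d₁/4) ∧
       (∀ (x : Λ₁) (r : ℝ), |r| ≤ c₁ → dist (φ₁ r x) x < d₁/4))) := by
    rw [hc₁def]; exact hΦ₁ (d₁/4) (by positivity)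
  obtain ⟨N, hNdef⟩ : ∃ n : ℕ, n = ⌈T₀ / c₁⌉₊ + 1 := ⟨_, rfl⟩
  have hN0 : 0 < (N:ℝ) := by
    have h : 0 < N := by rw [hNdef]; exact Nat.succ_pos _
    exact_mod_cast h
  have hNT : T₀ / (N:ℝ) ≤ c₁ := by
    rw [div_le_iff₀ hN0]
    have h1 : T₀ / c₁ ≤ (N:ℝ) := by
      rw [hNdef]
      exact le_trans (Nat.le_ceil _) (by exact_mod_cast Nat.le_succ _)
    have h3 := mul_le_mul_of_nonneg_right h1 (le_of_lt hc₁.1.1)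
    rw [div_mul_cancel₀ _ (ne_of_gt hc₁.1.1)] at h3
    linarith [h3]
  obtain ⟨δγ, hδγ0, hδγ⟩ := Qinv_near_gamma hPcont hbij hPγ p c₁ hc₁.1.1
  obtain ⟨δm, hδmdef⟩ : ∃ x : ℝ, x = min (Φ₂ (ε/4)) δγ := ⟨_, rfl⟩
  have hδm0 : 0 < δm := by
    rw [hδmdef]; exact lt_min (hΦ₂ (ε/4) (by linarith)).1.1 hδγ0
  have hδmΦ : δm ≤ Φ₂ (ε/4) := by rw [hδmdef]; exact min_le_left _ _
  have hδmγ : δm ≤ δγ := by rw [hδmdef]; exact min_le_right _ _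
  set rseq : ℕ → ℝ := fun j => Nat.rec δm (fun _ r => μf r / 2) j with hrseqdef
  have hr0 : rseq 0 = δm := rfl
  have hrS : ∀ j, rseq (j+1) = μf (rseq j) / 2 := fun j => rfl
  have hrpos : ∀ j, 0 < rseq j := by
    intro j; induction j with
    | zero => rw [hr0]; exact hδm0
    | succ j ih => rw [hrS]; have := (hμf _ ih).1.1; linarith
  have hrle : ∀ j, rseq (j+1) ≤ rseq j := fun j => by
    rw [hrS]
    have h1 := (hμf _ (hrpos j)).1.2.1
    have h2 := (hμf _ (hrpos j)).1.1
    linarith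
  have hranti : ∀ i j : ℕ, i ≤ j → rseq j ≤ rseq i :=
    fun i j hij => antitone_nat_of_succ_le hrle hij
  obtain ⟨δs, hδsdef⟩ : ∃ x : ℝ, x = min (rseq (N+1)) (Φ₂ (δm/2)) := ⟨_, rfl⟩
  have hδs0 : 0 < δs := by
    rw [hδsdef]; exact lt_min (hrpos (N+1)) (hΦ₂ (δm/2) (by linarith)).1.1
  have hδsr : δs ≤ rseq (N+1) := by rw [hδsdef]; exact min_le_left _ _
  have hδsΦ : δs ≤ Φ₂ (δm/2) := by rw [hδsdef]; exact min_le_right _ _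
  have hδsδm : δs ≤ δm / 2 := by
    refine le_trans hδsr (le_trans (hranti 1 (N+1) (by omega)) ?_)
    have h1 : rseq 1 = μf δm / 2 := by
      have h2 := hrS 0
      rw [hr0] at h2
      exact h2
    rw [h1]
    have := (hμf δm hδm0).1.2.1
    linarith
  obtain ⟨θ, hθdef⟩ : ∃ x : ℝ, x = μf δs / 2 := ⟨_, rfl⟩
  have hθ0 : 0 < θ := by rw [hθdef]; have := (hμf δs hδs0).1.1; linarith
  have hθδs : θ ≤ δs / 2 := by rw [hθdef]; have := (hμf δs hδs0).1.2.1; linarith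
  obtain ⟨βQ, hβQ0, hβQ⟩ := Qinv_ucont hPcont hbij hPγ p (θ/2) (by linarith)
    (min (d₁/4) c₁) (lt_min (by positivity) hc₁.1.1)
  obtain ⟨d, hddef⟩ : ∃ x : ℝ, x = min (min (θ/2) βQ) (min (ε/8) (δs/2)) := ⟨_, rfl⟩
  have hd0 : 0 < d := by
    rw [hddef]
    exact lt_min (lt_min (by linarith) hβQ0) (lt_min (by linarith) (by linarith))
  have hdθ : d ≤ θ/2 := by rw [hddef]; exact le_trans (min_le_left _ _) (min_le_left _ _)
  have hdβQ : d ≤ βQ := by rw [hddef]; exact le_trans (min_le_left _ _) (min_le_right _ _)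
  have hdε : d ≤ ε/8 := by rw [hddef]; exact le_trans (min_le_right _ _) (min_le_left _ _)
  have hdδs : d ≤ δs/2 := by rw [hddef]; exact le_trans (min_le_right _ _) (min_le_right _ _)
  refine ⟨d, hd0, ?_⟩
  intro ξ hξ
  have Hstep0 : ∀ u v : ℝ, u ≤ v → v ≤ u + 1 → dist (ξ v) (φ₂ (v - u) (ξ u)) < d := by
    intro u v h1 h2
    have h3 := hξ u (v - u) ⟨by linarith, by linarith⟩
    rwa [show u + (v - u) = v by ring] at h3
  by_cases hglob : ∀ n : ℤ, dist (ξ (n:ℝ)) q < δm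
  · -- ξ stays near q for all time: shadow by the singularity itself
    refine ⟨q, id, ⟨⟨continuous_id, strictMono_id, Function.surjective_id⟩, ?_⟩, ?_⟩
    · intro a b hab
      have hne : a - b ≠ 0 := sub_ne_zero.mpr (ne_of_gt hab)
      show |(a - b) / (a - b) - 1| < ε
      rw [div_self hne, sub_self, abs_zero]
      exact hε
    · intro t
      have h1 := Hstep0 (⌊t⌋ : ℝ) t (Int.floor_le t) (by linarith [Int.lt_floor_add_one t])
      have h2 : dist (φ₂ (t - (⌊t⌋:ℝ)) (ξ (⌊t⌋:ℝ))) q < ε/4 := by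
        have hsp := (hΦ₂ (ε/4) (by positivity)).2.1 (ξ (⌊t⌋:ℝ)) q (t - (⌊t⌋:ℝ))
          (abs_le.mpr ⟨by linarith [Int.floor_le t], by linarith [Int.lt_floor_add_one t]⟩)
          (le_of_lt (lt_of_lt_of_le (hglob ⌊t⌋) hδmΦ))
        rwa [hq (t - (⌊t⌋:ℝ))] at hsp
      calc dist (ξ t) (φ₂ (id t) q) = dist (ξ t) q := by rw [show id t = t from rfl, hq]
      _ ≤ dist (ξ t) (φ₂ (t - (⌊t⌋:ℝ)) (ξ (⌊t⌋:ℝ))) + dist (φ₂ (t - (⌊t⌋:ℝ)) (ξ (⌊t⌋:ℝ))) q :=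
          dist_triangle _ _ _
      _ < d + ε/4 := add_lt_add h1 h2
      _ ≤ ε/8 + ε/4 := by linarith
      _ < ε := by linarith
  · push_neg at hglob
    obtain ⟨n₀, hn₀⟩ := hglob
    set η : ℝ → Λ₁ := liftFn φ₁ P γ p T₀ c₁ ξ q δm δs with hηdef
    have ηoff : ∀ u : ℝ, ¬ InT ξ q δm δs u → η u = Qinv P γ p (ξ u) := by
      intro u h; rw [hηdef]; exact liftFn_off h
    -- F1 : a deep integer is followed by a mid integer
    have F1 : ∀ n : ℤ, dist (ξ (n:ℝ)) q < δs → dist (ξ ((n+1 : ℤ):ℝ)) q < δm := by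
      intro n hn
      have h1 := Hstep0 (n:ℝ) ((n:ℝ)+1) (by linarith) (by linarith)
      have h2 : dist (φ₂ 1 (ξ (n:ℝ))) q < δm/2 := by
        have hsp := (hΦ₂ (δm/2) (by linarith)).2.1 (ξ (n:ℝ)) q 1 (by norm_num)
          (le_of_lt (lt_of_lt_of_le hn hδsΦ))
        rwa [hq 1] at hsp
      rw [show ((n:ℝ)+1) - (n:ℝ) = 1 by ring] at h1
      have h3 : dist (ξ ((n:ℝ)+1)) q < d + δm/2 := by
        calc dist (ξ ((n:ℝ)+1)) q ≤ dist (ξ ((n:ℝ)+1)) (φ₂ 1 (ξ (n:ℝ)))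
            + dist (φ₂ 1 (ξ (n:ℝ))) q := dist_triangle _ _ _
        _ < d + δm/2 := add_lt_add h1 h2
      have hcast : ((n+1 : ℤ):ℝ) = (n:ℝ)+1 := by push_cast; ring
      rw [hcast]
      linarith
    -- F2 : if an integer is not deep, ξ stays θ-far during the following unit interval
    have F2 : ∀ n : ℤ, ∀ u : ℝ, (n:ℝ) ≤ u → u ≤ (n:ℝ)+1 → δs ≤ dist (ξ (n:ℝ)) q →
        θ ≤ dist (ξ u) q := by
      intro n u h1 h2 h3
      have hesc := (hμf δs hδs0).2 (ξ (n:ℝ)) h3 (u - n) ⟨by linarith, by linarith⟩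
      have hst := Hstep0 (n:ℝ) u h1 h2
      have htri : dist (φ₂ (u - n) (ξ (n:ℝ))) q ≤ dist (ξ u) (φ₂ (u - n) (ξ (n:ℝ))) +
          dist (ξ u) q := by
        rw [dist_comm (ξ u) (φ₂ (u - n) (ξ (n:ℝ)))]
        exact dist_triangle _ _ _
      have : μf δs ≤ d + dist (ξ u) q := by linarith
      rw [hθdef]
      linarith
    -- F3 : off-tube points are θ-far from q
    have F3 : ∀ t : ℝ, ¬ InT ξ q δm δs t → θ ≤ dist (ξ t) q := by
      intro t hT
      rcases lt_or_ge (dist (ξ ((⌊t⌋:ℤ):ℝ)) q) δs with hdeep | hfar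
      · exfalso
        apply hT
        refine ⟨⌊t⌋, hdeep, ?_⟩
        intro j hj1 hj2
        rw [min_self] at hj1
        rw [max_eq_right (Int.floor_le_ceil t)] at hj2
        have hcf := Int.ceil_le_floor_add_one t
        have : j = ⌊t⌋ ∨ j = ⌊t⌋ + 1 := by omega
        rcases this with h | h
        · rw [MidI, h]
          exact lt_of_lt_of_le hdeep (by linarith)
        · rw [MidI, h]
          exact F1 ⌊t⌋ hdeep
      · exact F2 ⌊t⌋ t (Int.floor_le t) (le_of_lt (Int.lt_floor_add_one t)) hfar
    -- F4 : in-tube points are close to q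
    have F4 : ∀ t : ℝ, InT ξ q δm δs t → dist (ξ t) q < d + ε/4 := by
      intro t hT
      have hmid := InT_floor_mid hT
      have h1 := Hstep0 (⌊t⌋:ℝ) t (Int.floor_le t) (by linarith [Int.lt_floor_add_one t])
      have h2 : dist (φ₂ (t - (⌊t⌋:ℝ)) (ξ (⌊t⌋:ℝ))) q < ε/4 := by
        have hsp := (hΦ₂ (ε/4) (by positivity)).2.1 (ξ (⌊t⌋:ℝ)) q (t - (⌊t⌋:ℝ))
          (abs_le.mpr ⟨by linarith [Int.floor_le t], by linarith [Int.lt_floor_add_one t]⟩)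
          (le_of_lt (lt_of_lt_of_le hmid hδmΦ))
        rwa [hq (t - (⌊t⌋:ℝ))] at hsp
      calc dist (ξ t) q ≤ dist (ξ t) (φ₂ (t - (⌊t⌋:ℝ)) (ξ (⌊t⌋:ℝ)))
          + dist (φ₂ (t - (⌊t⌋:ℝ)) (ξ (⌊t⌋:ℝ))) q := dist_triangle _ _ _
      _ < d + ε/4 := add_lt_add h1 h2
    -- chain of lower bounds after a far integer
    have chainZ : ∀ (n : ℤ) (j : ℕ), j ≤ N+1 → δm ≤ dist (ξ (n:ℝ)) q →
        rseq j ≤ dist (ξ ((n+(j:ℤ) : ℤ):ℝ)) q := by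
      intro n j
      induction j with
      | zero =>
          intro _ hn
          rw [hr0]
          have hc : ((n + ((0:ℕ):ℤ) : ℤ):ℝ) = (n:ℝ) := by push_cast; ring
          rw [hc]
          exact hn
      | succ j ih =>
          intro hj hn
          have hih := ih (by omega) hn
          have hesc := (hμf (rseq j) (hrpos j)).2 (ξ ((n+(j:ℤ) : ℤ):ℝ)) hih 1 (by norm_num)
          have hst := Hstep0 ((n+(j:ℤ) : ℤ):ℝ) (((n+(j:ℤ) : ℤ):ℝ)+1) (by linarith) (by linarith)
          have htri : dist (φ₂ 1 (ξ ((n+(j:ℤ) : ℤ):ℝ))) q ≤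
              dist (ξ (((n+(j:ℤ) : ℤ):ℝ)+1)) (φ₂ 1 (ξ ((n+(j:ℤ) : ℤ):ℝ))) +
              dist (ξ (((n+(j:ℤ) : ℤ):ℝ)+1)) q := by
            rw [dist_comm (ξ (((n+(j:ℤ) : ℤ):ℝ)+1))]
            exact dist_triangle _ _ _
          rw [show (((n+(j:ℤ) : ℤ):ℝ)+1) - ((n+(j:ℤ) : ℤ):ℝ) = 1 by ring] at hst
          have hd' : d ≤ rseq (j+1) := le_trans hdδs (le_trans (by linarith)
            (le_trans hδsr (hranti (j+1) (N+1) hj)))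
          have hcast : ((n+((j:ℕ)+1:ℤ) : ℤ):ℝ) = ((n+(j:ℤ) : ℤ):ℝ) + 1 := by push_cast; ring
          have hgoal : rseq (j+1) ≤ dist (ξ (((n+(j:ℤ) : ℤ):ℝ)+1)) q := by
            have heq := hrS j
            linarith
          rw [show ((j:ℕ)+1 : ℤ) = ((j+1 : ℕ) : ℤ) by push_cast; ring] at hcast
          rw [hcast]
          exact hgoal
    -- F5 : the entry endpoint of a tube is not deep
    have F5 : ∀ u : ℝ, HasA ξ q δm u → δs ≤ dist (ξ ((aIdx ξ q δm u : ℤ):ℝ)) q := by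
      intro u hA
      have hfar : δm ≤ dist (ξ ((aIdx ξ q δm u - 1 : ℤ):ℝ)) q := not_lt.mp (aIdx_spec hA).1
      have hesc := (hμf δm hδm0).2 (ξ ((aIdx ξ q δm u - 1 : ℤ):ℝ)) hfar 1 (by norm_num)
      have hst := Hstep0 ((aIdx ξ q δm u - 1 : ℤ):ℝ) (((aIdx ξ q δm u - 1 : ℤ):ℝ)+1)
        (by linarith) (by linarith)
      rw [show (((aIdx ξ q δm u - 1 : ℤ):ℝ)+1) - ((aIdx ξ q δm u - 1 : ℤ):ℝ) = 1 by ring] at hst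
      have hcast : ((aIdx ξ q δm u : ℤ):ℝ) = ((aIdx ξ q δm u - 1 : ℤ):ℝ) + 1 := by push_cast; ring
      rw [hcast]
      have htri : dist (φ₂ 1 (ξ ((aIdx ξ q δm u - 1 : ℤ):ℝ))) q ≤
          dist (ξ (((aIdx ξ q δm u - 1 : ℤ):ℝ)+1)) (φ₂ 1 (ξ ((aIdx ξ q δm u - 1 : ℤ):ℝ))) +
          dist (ξ (((aIdx ξ q δm u - 1 : ℤ):ℝ)+1)) q := by
        rw [dist_comm (ξ (((aIdx ξ q δm u - 1 : ℤ):ℝ)+1))]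
        exact dist_triangle _ _ _
      have h1 : rseq 1 = μf δm / 2 := by
        have h2 := hrS 0; rw [hr0] at h2; exact h2
      have h2 : δs ≤ rseq 1 := le_trans hδsr (hranti 1 (N+1) (by omega))
      linarith
    -- F6 : the exit endpoint of a tube is not deep
    have F6 : ∀ u : ℝ, HasB ξ q δm u → δs ≤ dist (ξ ((bIdx ξ q δm u : ℤ):ℝ)) q := by
      intro u hB
      by_contra hc
      push_neg at hc
      exact (bIdx_spec hB).1 (F1 _ hc)
    -- F7 : endpoints are mid
    have F7a : ∀ u : ℝ, InT ξ q δm δs u → HasA ξ q δm u → MidI ξ q δm (aIdx ξ q δm u) :=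
      fun u hT hA => mid_of_left hA _ le_rfl (aIdx_le_floor hT hA)
    have F7b : ∀ u : ℝ, InT ξ q δm δs u → HasB ξ q δm u → MidI ξ q δm (bIdx ξ q δm u) := by
      intro u hT hB
      rcases lt_or_ge ⌊u⌋ (bIdx ξ q δm u) with h | h
      · exact mid_of_right hB _ h le_rfl
      · have he : bIdx ξ q δm u = ⌊u⌋ :=
          le_antisymm h (le_trans (Int.floor_le_ceil u) (ceil_le_bIdx hT hB))
        rw [he]
        exact InT_floor_mid hT
    -- F12 : tubes are long
    have F12 : ∀ u : ℝ, InT ξ q δm δs u → HasA ξ q δm u → HasB ξ q δm u →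
        (N:ℤ) + 1 ≤ bIdx ξ q δm u - aIdx ξ q δm u := by
      intro u hT hA hB
      obtain ⟨k, hk, hka, hkb⟩ := deep_witness_between hT
      have h1 := hka hA
      have h2 := hkb hB
      by_contra hc
      push_neg at hc
      have hfar : δm ≤ dist (ξ ((aIdx ξ q δm u - 1 : ℤ):ℝ)) q := not_lt.mp (aIdx_spec hA).1
      set j : ℕ := (k - (aIdx ξ q δm u - 1)).toNat with hjdef
      have hj1 : (j:ℤ) = k - (aIdx ξ q δm u - 1) := Int.toNat_of_nonneg (by omega)
      have hj2 : j ≤ N + 1 := by omega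
      have hch := chainZ (aIdx ξ q δm u - 1) j hj2 hfar
      have hcast : ((aIdx ξ q δm u - 1 + (j:ℤ) : ℤ):ℝ) = ((k:ℤ):ℝ) := by
        rw [hj1]; push_cast; ring
      rw [hcast] at hch
      have h4 : rseq (N+1) ≤ rseq j := hranti j (N+1) hj2
      linarith
    -- F10 : the basic Qinv comparison step
    have F10 : ∀ u v : ℝ, u ≤ v → v ≤ u + 1 → θ ≤ dist (ξ v) q →
        dist (Qinv P γ p (φ₂ (v - u) (ξ u))) (Qinv P γ p (ξ v)) < min (d₁/4) c₁ := by
      intro u v h1 h2 h3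
      have hst := Hstep0 u v h1 h2
      have htri : dist (ξ v) q ≤ dist (ξ v) (φ₂ (v-u) (ξ u)) + dist (φ₂ (v-u) (ξ u)) q :=
        dist_triangle _ _ _
      refine hβQ _ _ (by linarith) (by linarith) ?_
      rw [dist_comm]
      linarith
    have F11 : ∀ y : Λ₂, y ≠ q → ∀ s : ℝ, φ₁ s (Qinv P γ p y) = Qinv P γ p (φ₂ s y) :=
      fun y hy s => Qinv_flow hφ₁ hφ₂ hsemi hbij hq hinv hy s
    -- F13 : tube data for a doubly-bounded tube
    have F13 : ∀ u : ℝ, InT ξ q δm δs u → HasA ξ q δm u → HasB ξ q δm u →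
        0 ≤ tauSel φ₁ T₀ (φ₁ ((bIdx ξ q δm u : ℝ) - (aIdx ξ q δm u : ℝ)) (zPt γ p c₁ (Qinv P γ p (ξ ((aIdx ξ q δm u : ℤ):ℝ))))) (zPt γ p c₁ (Qinv P γ p (ξ ((bIdx ξ q δm u : ℤ):ℝ)))) / ((bIdx ξ q δm u : ℝ) - (aIdx ξ q δm u : ℝ)) ∧ tauSel φ₁ T₀ (φ₁ ((bIdx ξ q δm u : ℝ) - (aIdx ξ q δm u : ℝ)) (zPt γ p c₁ (Qinv P γ p (ξ ((aIdx ξ q δm u : ℤ):ℝ))))) (zPt γ p c₁ (Qinv P γ p (ξ ((bIdx ξ q δm u : ℤ):ℝ)))) / ((bIdx ξ q δm u : ℝ) - (aIdx ξ q δm u : ℝ)) ≤ c₁ ∧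
          liftFn φ₁ P γ p T₀ c₁ ξ q δm δs u =
            φ₁ ((1 + tauSel φ₁ T₀ (φ₁ ((bIdx ξ q δm u : ℝ) - (aIdx ξ q δm u : ℝ)) (zPt γ p c₁ (Qinv P γ p (ξ ((aIdx ξ q δm u : ℤ):ℝ))))) (zPt γ p c₁ (Qinv P γ p (ξ ((bIdx ξ q δm u : ℤ):ℝ)))) / ((bIdx ξ q δm u : ℝ) - (aIdx ξ q δm u : ℝ))) * (u - (aIdx ξ q δm u : ℝ))) (zPt γ p c₁ (Qinv P γ p (ξ ((aIdx ξ q δm u : ℤ):ℝ)))) ∧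
          φ₁ ((1 + tauSel φ₁ T₀ (φ₁ ((bIdx ξ q δm u : ℝ) - (aIdx ξ q δm u : ℝ)) (zPt γ p c₁ (Qinv P γ p (ξ ((aIdx ξ q δm u : ℤ):ℝ))))) (zPt γ p c₁ (Qinv P γ p (ξ ((bIdx ξ q δm u : ℤ):ℝ)))) / ((bIdx ξ q δm u : ℝ) - (aIdx ξ q δm u : ℝ))) * ((bIdx ξ q δm u : ℝ) - (aIdx ξ q δm u : ℝ))) (zPt γ p c₁ (Qinv P γ p (ξ ((aIdx ξ q δm u : ℤ):ℝ)))) = (zPt γ p c₁ (Qinv P γ p (ξ ((bIdx ξ q δm u : ℤ):ℝ)))) := by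
      intro u hT hA hB
      have hzγ : (zPt γ p c₁ (Qinv P γ p (ξ ((aIdx ξ q δm u : ℤ):ℝ)))) ∈ γ := zPt_mem hpγ _ _
      have hvγ : (zPt γ p c₁ (Qinv P γ p (ξ ((bIdx ξ q δm u : ℤ):ℝ)))) ∈ γ := zPt_mem hpγ _ _
      have hba' := F12 u hT hA hB
      have hba : (N:ℝ) + 1 ≤ ((bIdx ξ q δm u : ℝ) - (aIdx ξ q δm u : ℝ)) := by exact_mod_cast hba'
      have hba0 : 0 < ((bIdx ξ q δm u : ℝ) - (aIdx ξ q δm u : ℝ)) := by linarith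
      have hτ := tauSel_spec (φ₁ := φ₁) (T₀ := T₀)
        (htrans _ (hinv ((bIdx ξ q δm u : ℝ) - (aIdx ξ q δm u : ℝ)) _ hzγ) _ hvγ)
      refine ⟨div_nonneg hτ.1 (le_of_lt hba0), ?_, liftFn_AB hT hA hB, ?_⟩
      · have h5 := (div_le_div_iff_of_pos_right hba0).mpr hτ.2.1
        have h6 : T₀ / ((bIdx ξ q δm u : ℝ) - (aIdx ξ q δm u : ℝ)) ≤ T₀ / (N:ℝ) := by
          apply div_le_div_of_nonneg_left (le_of_lt hT₀) hN0
          linarith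
        linarith
      · have harith : (1 + tauSel φ₁ T₀ (φ₁ ((bIdx ξ q δm u : ℝ) - (aIdx ξ q δm u : ℝ)) (zPt γ p c₁ (Qinv P γ p (ξ ((aIdx ξ q δm u : ℤ):ℝ))))) (zPt γ p c₁ (Qinv P γ p (ξ ((bIdx ξ q δm u : ℤ):ℝ)))) / ((bIdx ξ q δm u : ℝ) - (aIdx ξ q δm u : ℝ))) * ((bIdx ξ q δm u : ℝ) - (aIdx ξ q δm u : ℝ)) = tauSel φ₁ T₀ (φ₁ ((bIdx ξ q δm u : ℝ) - (aIdx ξ q δm u : ℝ)) (zPt γ p c₁ (Qinv P γ p (ξ ((aIdx ξ q δm u : ℤ):ℝ))))) (zPt γ p c₁ (Qinv P γ p (ξ ((bIdx ξ q δm u : ℤ):ℝ)))) + ((bIdx ξ q δm u : ℝ) - (aIdx ξ q δm u : ℝ)) := by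
          field_simp
          ring
        rw [harith, hφ₁.2.2]
        exact hτ.2.2
    -- time-reparametrization comparison along a single orbit
    have key : ∀ (X Y : ℝ) (w : Λ₁), 0 ≤ X - Y → X - Y ≤ c₁ →
        dist (φ₁ X w) (φ₁ Y w) < d₁/4 := by
      intro X Y w h1 h2
      have hXY : φ₁ X w = φ₁ (X - Y) (φ₁ Y w) := by
        rw [← hφ₁.2.2]
        congr 1
        ring
      rw [hXY]
      exact hc₁.2.2 _ _ (abs_le.mpr ⟨by linarith [hc₁.1.1], h2⟩)
    -- the lifted curve is a d₁-pseudotrajectory of φ₁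
    have hpseudo : IsPseudo φ₁ d₁ η := by
      intro t s hs
      obtain ⟨hs0, hs1⟩ := hs
      by_cases hT : InT ξ q δm δs t <;> by_cases hT' : InT ξ q δm δs (t+s)
      · -- in the same tube
        have hsc := same_comp hT hT' (by linarith) (by linarith)
        by_cases hA : HasA ξ q δm t
        · have hA' : HasA ξ q δm (t+s) := hsc.1.mp hA
          have haeq : aIdx ξ q δm t = aIdx ξ q δm (t+s) := hsc.2.2.1 hA
          by_cases hB : HasB ξ q δm t
          · have hB' : HasB ξ q δm (t+s) := hsc.2.1.mp hB
            have hbeq : bIdx ξ q δm t = bIdx ξ q δm (t+s) := hsc.2.2.2 hB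
            have hF := F13 t hT hA hB
            have hv' := liftFn_AB (φ₁ := φ₁) (P := P) (γ := γ) (p := p) (T₀ := T₀) (ρ := c₁)
              hT' hA' hB'
            rw [← haeq, ← hbeq] at hv'
            rw [hηdef, hv', hF.2.2.1, ← hφ₁.2.2]
            refine lt_trans (key _ _ _ ?_ ?_) (by linarith)
            · nlinarith [hF.1, hs0]
            · nlinarith [hF.1, hF.2.1, hs0, hs1]
          · have hB' : ¬ HasB ξ q δm (t+s) := fun h => hB (hsc.2.1.mpr h)
            have hv := liftFn_AnB (φ₁ := φ₁) (P := P) (γ := γ) (p := p) (T₀ := T₀) (ρ := c₁)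
              hT hA hB
            have hv' := liftFn_AnB (φ₁ := φ₁) (P := P) (γ := γ) (p := p) (T₀ := T₀) (ρ := c₁)
              hT' hA' hB'
            rw [← haeq] at hv'
            rw [hηdef, hv', hv, ← hφ₁.2.2,
              show t + s - ((aIdx ξ q δm t):ℝ) = s + (t - ((aIdx ξ q δm t):ℝ)) by ring, dist_self]
            exact hd₁0
        · have hA' : ¬ HasA ξ q δm (t+s) := fun h => hA (hsc.1.mpr h)
          have hB : HasB ξ q δm t := by
            rcases le_or_gt n₀ ⌊t⌋ with h | h
            · exact absurd ⟨n₀, not_lt.mpr hn₀, h⟩ hA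
            · exact ⟨n₀, not_lt.mpr hn₀, h⟩
          have hbeq : bIdx ξ q δm t = bIdx ξ q δm (t+s) := hsc.2.2.2 hB
          have hv := liftFn_nA (φ₁ := φ₁) (P := P) (γ := γ) (p := p) (T₀ := T₀) (ρ := c₁)
            hT hA
          have hv' := liftFn_nA (φ₁ := φ₁) (P := P) (γ := γ) (p := p) (T₀ := T₀) (ρ := c₁)
            hT' hA'
          rw [← hbeq] at hv'
          rw [hηdef, hv', hv, ← hφ₁.2.2,
            show t + s - ((bIdx ξ q δm t):ℝ) = s + (t - ((bIdx ξ q δm t):ℝ)) by ring, dist_self]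
          exact hd₁0
      · -- exit seam
        have hB : HasB ξ q δm t := by
          by_contra hB
          refine hT' (InT_of_between hT ?_ (fun h => absurd h hB))
          intro hA
          have haf := aIdx_le_floor hT hA
          have h7 : ((aIdx ξ q δm t):ℝ) ≤ ((⌊t⌋:ℤ):ℝ) := by exact_mod_cast haf
          linarith [Int.floor_le t]
        have hcb := ceil_le_bIdx hT hB
        have htb : t ≤ ((bIdx ξ q δm t):ℝ) := le_trans (Int.le_ceil t) (by exact_mod_cast hcb)
        have hbts : ((bIdx ξ q δm t):ℝ) < t + s := by
          by_contra hbts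
          push_neg at hbts
          refine hT' (InT_of_between hT ?_ (fun _ => hbts))
          intro hA
          have haf := aIdx_le_floor hT hA
          have h7 : ((aIdx ξ q δm t):ℝ) ≤ ((⌊t⌋:ℤ):ℝ) := by exact_mod_cast haf
          linarith [Int.floor_le t]
        have hlevb := F6 t hB
        have hmidb := F7b t hT hB
        have hneb : (ξ ((bIdx ξ q δm t : ℤ):ℝ)) ≠ q := dist_pos.mp (lt_of_lt_of_le hδs0 hlevb)
        have hvsp : ∃ g ∈ γ, dist (Qinv P γ p (ξ ((bIdx ξ q δm t : ℤ):ℝ))) g ≤ c₁ :=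
          hδγ _ hneb (le_of_lt (lt_of_lt_of_le hmidb hδmγ))
        have hvc := zPt_close (p := p) hvsp
        have hval : ∃ lam : ℝ, 0 ≤ lam ∧ lam ≤ c₁ ∧
            φ₁ (t + s - ((bIdx ξ q δm t):ℝ)) (zPt γ p c₁ (Qinv P γ p (ξ ((bIdx ξ q δm t : ℤ):ℝ)))) = φ₁ (lam * (((bIdx ξ q δm t):ℝ) - t)) (φ₁ s (η t)) := by
          by_cases hA : HasA ξ q δm t
          · have hF := F13 t hT hA hB
            have hba' := F12 t hT hA hB
            have hba : (N:ℝ) + 1 ≤ ((bIdx ξ q δm t):ℝ) - ((aIdx ξ q δm t):ℝ) := by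
              exact_mod_cast hba'
            have hne0 : ((bIdx ξ q δm t):ℝ) - ((aIdx ξ q δm t):ℝ) ≠ 0 := by
              intro h0
              rw [h0] at hba
              linarith
            refine ⟨_, hF.1, hF.2.1, ?_⟩
            rw [hηdef, hF.2.2.1, ← hφ₁.2.2, ← hφ₁.2.2]
            rw [show (tauSel φ₁ T₀ (φ₁ ((bIdx ξ q δm t : ℝ) - (aIdx ξ q δm t : ℝ)) (zPt γ p c₁ (Qinv P γ p (ξ ((aIdx ξ q δm t : ℤ):ℝ))))) (zPt γ p c₁ (Qinv P γ p (ξ ((bIdx ξ q δm t : ℤ):ℝ)))) / ((bIdx ξ q δm t : ℝ) - (aIdx ξ q δm t : ℝ))) * (((bIdx ξ q δm t):ℝ) - t) + s + (1 + (tauSel φ₁ T₀ (φ₁ ((bIdx ξ q δm t : ℝ) - (aIdx ξ q δm t : ℝ)) (zPt γ p c₁ (Qinv P γ p (ξ ((aIdx ξ q δm t : ℤ):ℝ))))) (zPt γ p c₁ (Qinv P γ p (ξ ((bIdx ξ q δm t : ℤ):ℝ)))) / ((bIdx ξ q δm t : ℝ) - (aIdx ξ q δm t : ℝ)))) * (t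 - (aIdx ξ q δm t : ℝ)) =
              (t + s - ((bIdx ξ q δm t):ℝ)) + (1 + (tauSel φ₁ T₀ (φ₁ ((bIdx ξ q δm t : ℝ) - (aIdx ξ q δm t : ℝ)) (zPt γ p c₁ (Qinv P γ p (ξ ((aIdx ξ q δm t : ℤ):ℝ))))) (zPt γ p c₁ (Qinv P γ p (ξ ((bIdx ξ q δm t : ℤ):ℝ)))) / ((bIdx ξ q δm t : ℝ) - (aIdx ξ q δm t : ℝ)))) * ((bIdx ξ q δm t : ℝ) - (aIdx ξ q δm t : ℝ)) from by field_simp; ring]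
            rw [hφ₁.2.2, hF.2.2.2]
          · refine ⟨0, le_rfl, le_of_lt hc₁.1.1, ?_⟩
            have hv := liftFn_nA (φ₁ := φ₁) (P := P) (γ := γ) (p := p) (T₀ := T₀) (ρ := c₁)
              hT hA
            rw [hηdef, hv, ← hφ₁.2.2, ← hφ₁.2.2]
            congr 1
            ring
        obtain ⟨lam, hl0, hlc, hveq⟩ := hval
        have hb1 : dist (η (t+s)) (φ₁ (t + s - ((bIdx ξ q δm t):ℝ)) (Qinv P γ p (ξ ((bIdx ξ q δm t : ℤ):ℝ)))) < d₁/4 := by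
          rw [ηoff (t+s) hT', F11 _ hneb (t + s - ((bIdx ξ q δm t):ℝ))]
          have h8 := F10 ((bIdx ξ q δm t):ℝ) (t+s) (by linarith) (by linarith) (F3 (t+s) hT')
          rw [dist_comm]
          exact lt_of_lt_of_le h8 (min_le_left _ _)
        have hb2 : dist (φ₁ (t + s - ((bIdx ξ q δm t):ℝ)) (Qinv P γ p (ξ ((bIdx ξ q δm t : ℤ):ℝ))))
            (φ₁ (t + s - ((bIdx ξ q δm t):ℝ)) (zPt γ p c₁ (Qinv P γ p (ξ ((bIdx ξ q δm t : ℤ):ℝ))))) < d₁/4 := by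
          apply hc₁.2.1 _ _ _ (abs_le.mpr ⟨by linarith, by linarith⟩)
          exact hvc
        have hb3 : dist (φ₁ (t + s - ((bIdx ξ q δm t):ℝ)) (zPt γ p c₁ (Qinv P γ p (ξ ((bIdx ξ q δm t : ℤ):ℝ))))) (φ₁ s (η t)) < d₁/4 := by
          rw [hveq]
          refine hc₁.2.2 _ _ ?_
          rw [abs_of_nonneg (mul_nonneg hl0 (by linarith))]
          nlinarith
        calc dist (η (t+s)) (φ₁ s (η t)) ≤
            dist (η (t+s)) (φ₁ (t + s - ((bIdx ξ q δm t):ℝ)) (Qinv P γ p (ξ ((bIdx ξ q δm t : ℤ):ℝ)))) +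
            dist (φ₁ (t + s - ((bIdx ξ q δm t):ℝ)) (Qinv P γ p (ξ ((bIdx ξ q δm t : ℤ):ℝ)))) (φ₁ (t + s - ((bIdx ξ q δm t):ℝ)) (zPt γ p c₁ (Qinv P γ p (ξ ((bIdx ξ q δm t : ℤ):ℝ))))) +
            dist (φ₁ (t + s - ((bIdx ξ q δm t):ℝ)) (zPt γ p c₁ (Qinv P γ p (ξ ((bIdx ξ q δm t : ℤ):ℝ))))) (φ₁ s (η t)) := dist_triangle4 _ _ _ _
        _ < d₁/4 + d₁/4 + d₁/4 := add_lt_add (add_lt_add hb1 hb2) hb3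
        _ ≤ d₁ := by linarith
      · -- entry seam
        have hA' : HasA ξ q δm (t+s) := by
          by_contra hA'
          refine hT (InT_of_between hT' (fun h => absurd h hA') ?_)
          intro hB'
          have hcb := ceil_le_bIdx hT' hB'
          have h7 : ((⌈t+s⌉:ℤ):ℝ) ≤ ((bIdx ξ q δm (t+s)):ℝ) := by exact_mod_cast hcb
          linarith [Int.le_ceil (t+s)]
        have hafl := aIdx_le_floor hT' hA'
        have hale : ((aIdx ξ q δm (t+s)):ℝ) ≤ t + s := by
          have h7 : ((aIdx ξ q δm (t+s)):ℝ) ≤ ((⌊t+s⌋:ℤ):ℝ) := by exact_mod_cast hafl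
          linarith [Int.floor_le (t+s)]
        have hta : t < ((aIdx ξ q δm (t+s)):ℝ) := by
          by_contra hta
          push_neg at hta
          refine hT (InT_of_between hT' (fun _ => hta) ?_)
          intro hB'
          have hcb := ceil_le_bIdx hT' hB'
          have h7 : ((⌈t+s⌉:ℤ):ℝ) ≤ ((bIdx ξ q δm (t+s)):ℝ) := by exact_mod_cast hcb
          linarith [Int.le_ceil (t+s)]
        have hmida := F7a (t+s) hT' hA'
        have hleva := F5 (t+s) hA'
        have hnea : (ξ ((aIdx ξ q δm (t+s) : ℤ):ℝ)) ≠ q := dist_pos.mp (lt_of_lt_of_le hδs0 hleva)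
        have hzsp : ∃ g ∈ γ, dist (Qinv P γ p (ξ ((aIdx ξ q δm (t+s) : ℤ):ℝ))) g ≤ c₁ :=
          hδγ _ hnea (le_of_lt (lt_of_lt_of_le hmida hδmγ))
        have hzc := zPt_close (p := p) hzsp
        have hu1 : t + s - ((aIdx ξ q δm (t+s)):ℝ) ≤ 1 := by linarith
        have hu0 : 0 ≤ t + s - ((aIdx ξ q δm (t+s)):ℝ) := by linarith
        have hval : ∃ lam : ℝ, 0 ≤ lam ∧ lam ≤ c₁ ∧ η (t+s) =
            φ₁ ((1 + lam) * (t + s - ((aIdx ξ q δm (t+s)):ℝ))) (zPt γ p c₁ (Qinv P γ p (ξ ((aIdx ξ q δm (t+s) : ℤ):ℝ)))) := by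
          by_cases hB' : HasB ξ q δm (t+s)
          · have hF := F13 (t+s) hT' hA' hB'
            exact ⟨_, hF.1, hF.2.1, by rw [hηdef]; exact hF.2.2.1⟩
          · refine ⟨0, le_rfl, le_of_lt hc₁.1.1, ?_⟩
            have hv := liftFn_AnB (φ₁ := φ₁) (P := P) (γ := γ) (p := p) (T₀ := T₀) (ρ := c₁)
              hT' hA' hB'
            rw [hηdef, hv]
            congr 1
            ring
        obtain ⟨lam, hl0, hlc, hηval⟩ := hval
        have hb1 : dist (η (t+s)) (φ₁ (t + s - ((aIdx ξ q δm (t+s)):ℝ)) (zPt γ p c₁ (Qinv P γ p (ξ ((aIdx ξ q δm (t+s) : ℤ):ℝ))))) < d₁/4 := by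
          rw [hηval]
          refine key _ _ _ ?_ ?_
          · nlinarith
          · nlinarith
        have hne : ξ t ≠ q := dist_pos.mp (lt_of_lt_of_le hθ0 (F3 t hT))
        have hb2 : dist (φ₁ (t + s - ((aIdx ξ q δm (t+s)):ℝ)) (zPt γ p c₁ (Qinv P γ p (ξ ((aIdx ξ q δm (t+s) : ℤ):ℝ)))))
            (φ₁ (t + s - ((aIdx ξ q δm (t+s)):ℝ)) (Qinv P γ p (ξ ((aIdx ξ q δm (t+s) : ℤ):ℝ)))) < d₁/4 := by
          apply hc₁.2.1 _ _ _ (abs_le.mpr ⟨by linarith, by linarith⟩)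
          rw [dist_comm]
          exact hzc
        have hstep3 := F10 t ((aIdx ξ q δm (t+s)):ℝ) (le_of_lt hta) (by linarith)
          (le_trans (by linarith : θ ≤ δs) hleva)
        have hb3 : dist (φ₁ (t + s - ((aIdx ξ q δm (t+s)):ℝ)) (Qinv P γ p (ξ ((aIdx ξ q δm (t+s) : ℤ):ℝ)))) (φ₁ s (η t)) < d₁/4 := by
          rw [ηoff t hT]
          have hcomp : φ₁ s (Qinv P γ p (ξ t)) =
              φ₁ (t + s - ((aIdx ξ q δm (t+s)):ℝ)) (Qinv P γ p (φ₂ (((aIdx ξ q δm (t+s)):ℝ) - t) (ξ t))) := by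
            rw [← F11 (ξ t) hne (((aIdx ξ q δm (t+s)):ℝ) - t), ← hφ₁.2.2]
            congr 1
            ring
          rw [hcomp]
          apply hc₁.2.1 _ _ _ (abs_le.mpr ⟨by linarith, by linarith⟩)
          rw [dist_comm]
          exact le_of_lt (lt_of_lt_of_le hstep3 (min_le_right _ _))
        calc dist (η (t+s)) (φ₁ s (η t)) ≤
            dist (η (t+s)) (φ₁ (t + s - ((aIdx ξ q δm (t+s)):ℝ)) (zPt γ p c₁ (Qinv P γ p (ξ ((aIdx ξ q δm (t+s) : ℤ):ℝ))))) +
            dist (φ₁ (t + s - ((aIdx ξ q δm (t+s)):ℝ)) (zPt γ p c₁ (Qinv P γ p (ξ ((aIdx ξ q δm (t+s) : ℤ):ℝ))))) (φ₁ (t + s - ((aIdx ξ q δm (t+s)):ℝ)) (Qinv P γ p (ξ ((aIdx ξ q δm (t+s) : ℤ):ℝ)))) +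
            dist (φ₁ (t + s - ((aIdx ξ q δm (t+s)):ℝ)) (Qinv P γ p (ξ ((aIdx ξ q δm (t+s) : ℤ):ℝ)))) (φ₁ s (η t)) :=
          dist_triangle4 _ _ _ _
        _ < d₁/4 + d₁/4 + d₁/4 := add_lt_add (add_lt_add hb1 hb2) hb3
        _ ≤ d₁ := by linarith
      · -- outside all tubes
        have h2 := ηoff t hT
        have h1 := ηoff (t+s) hT'
        have hθt := F3 t hT
        have hθt' := F3 (t+s) hT'
        have hne : ξ t ≠ q := dist_pos.mp (lt_of_lt_of_le hθ0 hθt)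
        rw [h1, h2, F11 (ξ t) hne s]
        have h4 := F10 t (t+s) (by linarith) (by linarith) hθt'
        rw [show t + s - t = s by ring] at h4
        rw [dist_comm]
        refine lt_of_lt_of_le h4 (le_trans (min_le_left _ _) (by linarith))
    -- conclude: shadow the lifted pseudotrajectory and project back
    obtain ⟨x₁, hfun, hrep, hclose⟩ := hshad η hpseudo
    refine ⟨P x₁, hfun, ⟨hrep.1, fun a b hab =>
      lt_of_lt_of_le (hrep.2 a b hab) (by linarith [hε₁a])⟩, ?_⟩
    intro u
    have hsecond : dist (P (η u)) (P (φ₁ (hfun u) x₁)) < ε/4 := by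
      apply hβP
      calc dist (η u) (φ₁ (hfun u) x₁) < ε₁ := hclose u
      _ < βP := by linarith [hε₁b, hβP0]
    have hfirst : dist (ξ u) (P (η u)) ≤ d + ε/4 := by
      by_cases hTu : InT ξ q δm δs u
      · have hmem : η u ∈ γ := by rw [hηdef]; exact liftFn_mem_gamma hpγ hinv hTu
        rw [hPγ _ hmem]
        exact le_of_lt (F4 u hTu)
      · have hne : ξ u ≠ q := dist_pos.mp (lt_of_lt_of_le hθ0 (F3 u hTu))
        rw [ηoff u hTu, (Qinv_spec (p := p) hbij hne).2, dist_self]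
        linarith
    calc dist (ξ u) (φ₂ (hfun u) (P x₁)) = dist (ξ u) (P (φ₁ (hfun u) x₁)) := by
          rw [hsemi]
    _ ≤ dist (ξ u) (P (η u)) + dist (P (η u)) (P (φ₁ (hfun u) x₁)) := dist_triangle _ _ _
    _ < (d + ε/4) + ε/4 := add_lt_add_of_le_of_lt hfirst hsecond
    _ ≤ (ε/8 + ε/4) + ε/4 := by linarith
    _ < ε := by linarith
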